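/- Let 0 < ε ≤ r with r ≤ 1/2 and let p, q be points with ||pq| − r| ≤ ε. Let o be a point with |op| ≤ 3δ/√2 where δ ≪ r (specifically sin β ≤ (3δ/√2)/r < 1/2 for β = ∠obp). Let b be the point on ray oq with |pb| = r, lying between o and q. Then |qb| ≤ ε / cos β; in particular |qb| ≤ 2ε when β ≤ π/3. -/
import Mathlib
set_option maxHeartbeats 1000000


open Real EuclideanGeometry

/-- Let 0 < ε ≤ r ≤ 1/2 and points p, q with ||pq| − r| ≤ ε. Let o satisfy
|op| ≤ 3δ/√2 with δ ≪ r, specifically sin β ≤ (3δ/√2)/r < 1/2 for β = ∠obp.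
Let b be the point on ray oq with |pb| = r, lying between o and q. Then
|qb| ≤ ε / cos β; in particular |qb| ≤ 2ε when β ≤ π/3. -/
theorem stmt17 (o p q b : EuclideanSpace ℝ (Fin 2)) (r ε δ : ℝ)
    (hε : 0 < ε) (her : ε ≤ r) (hr : r ≤ 1 / 2)
    (hpq : |dist p q - r| ≤ ε)
    (hop : dist o p ≤ 3 * δ / Real.sqrt 2)
    (hb : b ∈ segment ℝ o q) (hpb : dist p b = r)
    (hsin : Real.sin (∠ o b p) ≤ (3 * δ / Real.sqrt 2) / r)
    (hsin' : (3 * δ / Real.sqrt 2) / r < 1 / 2) :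
    dist q b ≤ ε / Real.cos (∠ o b p) ∧
    (∠ o b p ≤ π / 3 → dist q b ≤ 2 * ε) := by
  have hrpos : 0 < r := hε.trans_le her
  -- |op| < r/2
  have hopr : dist o p < r / 2 := by
    have := (div_lt_iff₀ hrpos).mp hsin'
    linarith
  have hsinlt : Real.sin (∠ o b p) < 1 / 2 := lt_of_le_of_lt hsin hsin'
  -- o ≠ b
  have hob : o ≠ b := by
    rintro rfl
    rw [angle_self_left, Real.sin_pi_div_two] at hsinlt
    linarith
  -- cos β > 0 via law of cosines in triangle o b p
  have hcos : 0 < Real.cos (∠ o b p) := by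
    by_contra hc
    push_neg at hc
    have hlaw := EuclideanGeometry.law_cos o b p
    have h1 : (0:ℝ) ≤ dist o b := dist_nonneg
    have h2 : (0:ℝ) ≤ dist o p := dist_nonneg
    rw [hpb] at hlaw
    nlinarith [mul_nonpos_of_nonneg_of_nonpos (mul_nonneg h1 hrpos.le) hc]
  -- key inequality
  have key : dist q b * Real.cos (∠ o b p) ≤ ε := by
    rcases eq_or_ne b q with rfl | hbq
    · simp [hε.le]
    · have hsbtw : Sbtw ℝ o b q := by
        refine ⟨mem_segment_iff_wbtw.mp hb, Ne.symm hob, hbq⟩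
      have hpi : ∠ o b q = π := hsbtw.angle₁₂₃_eq_pi
      have hsum : ∠ p b o + ∠ p b q = π :=
        EuclideanGeometry.angle_add_angle_eq_pi_of_angle_eq_pi p hpi
      rw [angle_comm p b o] at hsum
      have hcospbq : Real.cos (∠ p b q) = - Real.cos (∠ o b p) := by
        have : ∠ p b q = π - ∠ o b p := by linarith
        rw [this, Real.cos_pi_sub]
      have hlaw := EuclideanGeometry.law_cos p b q
      rw [hpb, hcospbq] at hlaw
      have ht : (0:ℝ) ≤ dist q b := dist_nonneg
      have hc1 : Real.cos (∠ o b p) ≤ 1 := Real.cos_le_one _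
      have hpq' : dist p q ≤ r + ε := by
        have := abs_le.mp hpq
        linarith [this.2]
      have hpq0 : (0:ℝ) ≤ dist p q := dist_nonneg
      nlinarith [mul_nonneg ht hcos.le, sq_nonneg (dist q b - ε),
        mul_le_of_le_one_right ht hc1]
  constructor
  · rw [le_div_iff₀ hcos]
    exact key
  · intro h3
    have hβ0 : 0 ≤ ∠ o b p := EuclideanGeometry.angle_nonneg o b p
    have hcoshalf : Real.cos (π / 3) ≤ Real.cos (∠ o b p) := by
      apply Real.cos_le_cos_of_nonneg_of_le_pi hβ0 _ h3
      linarith [Real.pi_pos]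
    rw [Real.cos_pi_div_three] at hcoshalf
    nlinarith [dist_nonneg (x := q) (y := b)]
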